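/- Let f : I → ℝ be strictly increasing and n ∈ ℕ. The n-variable generalized quasiarithmetic mean A_f^{[n]}(x) := f⁽⁻¹⁾((f(x₁)+⋯+f(xₙ))/n) is well defined and satisfies min(x) ≤ A_f^{[n]}(x) ≤ max(x) for all x ∈ Iⁿ. -/

import Mathlib

open Set Filter Topology

/-- `finv` is the generalized inverse of the strictly increasing function `f : I → ℝ`:
an increasing continuous left inverse of `f` mapping `conv (f '' I)` into `I`. -/
def IsGenInv (I : Set ℝ) (f finv : ℝ → ℝ) : Prop :=
  MonotoneOn finv (convexHull ℝ (f '' I)) ∧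
  ContinuousOn finv (convexHull ℝ (f '' I)) ∧
  Set.MapsTo finv (convexHull ℝ (f '' I)) I ∧
  ∀ x ∈ I, finv (f x) = x

/-- The `n`-variable generalized quasiarithmetic mean `A_f^{[n]}` generated by `f`,
where `finv` is the generalized inverse of `f`. -/
noncomputable def qam (finv f : ℝ → ℝ) (n : ℕ) (x : Fin n → ℝ) : ℝ :=
  finv ((∑ i, f (x i)) / n)

/-- the generalized quasiarithmetic mean is well defined (the average of the
values lies in `conv(f(I))`, so the mean lies in `I`) and lies between `min x` and `max x`. -/
theorem stmt5 (I : Set ℝ) (hIo : IsOpen I) (hIc : I.OrdConnected) (hne : I.Nonempty)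
    (f finv : ℝ → ℝ) (hf : StrictMonoOn f I) (hinv : IsGenInv I f finv)
    (n : ℕ) (x : Fin (n + 1) → ℝ) (hx : ∀ i, x i ∈ I) :
    (∑ i, f (x i)) / ((n + 1 : ℕ) : ℝ) ∈ convexHull ℝ (f '' I) ∧
    qam finv f (n + 1) x ∈ I ∧
    Finset.univ.inf' Finset.univ_nonempty x ≤ qam finv f (n + 1) x ∧
    qam finv f (n + 1) x ≤ Finset.univ.sup' Finset.univ_nonempty x := by
  obtain ⟨hmono, hcont, hmaps, hleft⟩ := hinv
  have hnpos : (0:ℝ) < ((n + 1 : ℕ) : ℝ) := by positivity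
  have havg : (∑ i, f (x i)) / ((n + 1 : ℕ) : ℝ) ∈ convexHull ℝ (f '' I) := by
    have := (convex_convexHull ℝ (f '' I)).sum_mem
      (t := (Finset.univ : Finset (Fin (n+1)))) (w := fun _ => 1 / ((n + 1 : ℕ) : ℝ))
      (z := fun i => f (x i)) (fun i _ => by positivity)
      (by
        rw [Finset.sum_const, Finset.card_univ, Fintype.card_fin]
        rw [nsmul_eq_mul, mul_one_div_cancel hnpos.ne'])
      (fun i _ => subset_convexHull ℝ _ ⟨x i, hx i, rfl⟩)
    convert this using 1
    rw [Finset.sum_div]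
    congr 1 with i
    rw [smul_eq_mul]
    ring
  refine ⟨havg, hmaps havg, ?_, ?_⟩
  · obtain ⟨i, -, hi⟩ := Finset.exists_mem_eq_inf' (Finset.univ_nonempty) x
    rw [hi]
    have hfi : f (x i) ≤ (∑ j, f (x j)) / ((n + 1 : ℕ) : ℝ) := by
      rw [le_div_iff₀ hnpos]
      calc f (x i) * ((n + 1 : ℕ) : ℝ) = ∑ _j : Fin (n+1), f (x i) := by
            rw [Finset.sum_const, Finset.card_univ, Fintype.card_fin]; push_cast; ring
        _ ≤ ∑ j, f (x j) := Finset.sum_le_sum (fun j _ => by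
            rcases eq_or_lt_of_le (hi ▸ Finset.inf'_le x (Finset.mem_univ j)) with h | h
            · rw [h]
            · exact (hf (hx i) (hx j) h).le)
    have := hmono (subset_convexHull ℝ _ ⟨x i, hx i, rfl⟩) havg hfi
    rwa [hleft _ (hx i)] at this
  · obtain ⟨i, -, hi⟩ := Finset.exists_mem_eq_sup' (Finset.univ_nonempty) x
    rw [hi]
    have hfi : (∑ j, f (x j)) / ((n + 1 : ℕ) : ℝ) ≤ f (x i) := by
      rw [div_le_iff₀ hnpos]
      calc (∑ j, f (x j)) ≤ ∑ _j : Fin (n+1), f (x i) := Finset.sum_le_sum (fun j _ => by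
            rcases eq_or_lt_of_le (hi ▸ Finset.le_sup' x (Finset.mem_univ j)) with h | h
            · rw [h]
            · exact (hf (hx j) (hx i) h).le)
        _ = f (x i) * ((n + 1 : ℕ) : ℝ) := by
            rw [Finset.sum_const, Finset.card_univ, Fintype.card_fin]; push_cast; ring
    have := hmono havg (subset_convexHull ℝ _ ⟨x i, hx i, rfl⟩) hfi
    rwa [hleft _ (hx i)] at this
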